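/- Let n ≥ 2 and suppose positive integers x, y, z, w satisfy n^x = (n+1)^y + (n+2)^z + (n+3)^w. If n ≡ 2 (mod 4), then x is odd. -/

import Mathlib

theorem stmt_8 (n x y z w : ℕ) (hn : 2 ≤ n)
    (hx : 1 ≤ x) (hy : 1 ≤ y) (hz : 1 ≤ z) (hw : 1 ≤ w)
    (heq : n ^ x = (n + 1) ^ y + (n + 2) ^ z + (n + 3) ^ w)
    (h4 : n % 4 = 2) : Odd x := by
  rw [← Nat.not_even_iff_odd]
  intro hev
  -- n is even, so n+1 is odd
  have hne : n % 2 = 0 := by omega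
  have hm : 3 ≤ n + 1 := by omega
  haveI : Fact (1 < n + 1) := ⟨by omega⟩
  -- work in ZMod (n+1)
  have hcast := congrArg (Nat.cast : ℕ → ZMod (n + 1)) heq
  push_cast at hcast
  have h0 : ((n : ZMod (n + 1)) + 1) = 0 := by
    have : ((n + 1 : ℕ) : ZMod (n + 1)) = 0 := ZMod.natCast_self _
    push_cast at this
    exact this
  have hn1 : (n : ZMod (n + 1)) = -1 := by linear_combination h0
  rw [hn1] at hcast
  have hx1 : ((-1 : ZMod (n+1))) ^ x = 1 := Even.neg_one_pow hev
  have h1 : ((-1 : ZMod (n+1)) + 1) = 0 := by ring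
  have h2 : ((-1 : ZMod (n+1)) + 2) = 1 := by ring
  have h3 : ((-1 : ZMod (n+1)) + 3) = 2 := by ring
  rw [hx1, h1, h2, h3, zero_pow (by omega), one_pow] at hcast
  -- hcast : 1 = 0 + 1 + 2 ^ w
  have h2w : (2 : ZMod (n + 1)) ^ w = 0 := by linear_combination -hcast
  have hu : IsUnit (2 : ZMod (n + 1)) := by
    rw [show (2 : ZMod (n+1)) = ((2:ℕ) : ZMod (n+1)) by push_cast; ring, ZMod.isUnit_iff_coprime]
    have : Nat.Coprime 2 (n + 1) := by
      rw [Nat.coprime_two_left]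
      exact Nat.odd_iff.mpr (by omega)
    exact this
  exact (hu.pow w).ne_zero h2w
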